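/- Let q be a prime power and let F be a finite field with q² elements, with field involution σ : x ↦ x^q. Consider the standard hermitian form h(v) = v₁·σ(v₁) + v₂·σ(v₂) on F². Then the special unitary group SU₂(F,σ) = {g ∈ SL₂(F) : σ(g)ᵀ · g = 1} acts transitively on the vectors of any fixed nonzero norm: for all v, w ∈ F² with h(v) = h(w) ≠ 0, there exists g ∈ SU₂(F,σ) such that g·v = w. -/

import Mathlib

open Matrix in
/-- The special unitary group `SU₂(F,σ) = {g ∈ SL₂(F) : σ(g)ᵀ · g = 1}`, where the
field involution `σ` is applied entrywise. -/
def SU₂ {F : Type} [Field F] (σ : F →+* F) :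
    Subgroup (SpecialLinearGroup (Fin 2) F) where
  carrier := {g | ((g : Matrix (Fin 2) (Fin 2) F).map σ)ᵀ * (g : Matrix (Fin 2) (Fin 2) F) = 1}
  one_mem' := by
    simp [Set.mem_setOf_eq, SpecialLinearGroup.coe_one, Matrix.map_one]
  mul_mem' := by
    intro a b ha hb
    simp only [Set.mem_setOf_eq] at ha hb ⊢
    change (((a : Matrix (Fin 2) (Fin 2) F) * (b : Matrix (Fin 2) (Fin 2) F)).map σ)ᵀ *
      ((a : Matrix (Fin 2) (Fin 2) F) * (b : Matrix (Fin 2) (Fin 2) F)) = 1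
    rw [Matrix.map_mul, Matrix.transpose_mul]
    calc ((b : Matrix (Fin 2) (Fin 2) F).map σ)ᵀ * ((a : Matrix (Fin 2) (Fin 2) F).map σ)ᵀ *
          ((a : Matrix (Fin 2) (Fin 2) F) * (b : Matrix (Fin 2) (Fin 2) F))
        = ((b : Matrix (Fin 2) (Fin 2) F).map σ)ᵀ *
            (((a : Matrix (Fin 2) (Fin 2) F).map σ)ᵀ * (a : Matrix (Fin 2) (Fin 2) F)) *
            (b : Matrix (Fin 2) (Fin 2) F) := by noncomm_ring
      _ = 1 := by rw [ha, mul_one, hb]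
  inv_mem' := by
    intro g hg
    simp only [Set.mem_setOf_eq] at hg ⊢
    have hBC : (g : Matrix (Fin 2) (Fin 2) F) * ((g⁻¹ : SpecialLinearGroup (Fin 2) F) :
        Matrix (Fin 2) (Fin 2) F) = 1 := by
      exact congrArg (fun x : SpecialLinearGroup (Fin 2) F => (x : Matrix (Fin 2) (Fin 2) F))
        (mul_inv_cancel g)
    have h3 : (((g⁻¹ : SpecialLinearGroup (Fin 2) F) : Matrix (Fin 2) (Fin 2) F).map σ)ᵀ *
        ((g : Matrix (Fin 2) (Fin 2) F).map σ)ᵀ = 1 := by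
      rw [← Matrix.transpose_mul, ← Matrix.map_mul, hBC,
        Matrix.map_one σ (map_zero σ) (map_one σ), Matrix.transpose_one]
    calc (((g⁻¹ : SpecialLinearGroup (Fin 2) F) : Matrix (Fin 2) (Fin 2) F).map σ)ᵀ *
          ((g⁻¹ : SpecialLinearGroup (Fin 2) F) : Matrix (Fin 2) (Fin 2) F)
        = (((g⁻¹ : SpecialLinearGroup (Fin 2) F) : Matrix (Fin 2) (Fin 2) F).map σ)ᵀ *
            (((g : Matrix (Fin 2) (Fin 2) F).map σ)ᵀ * (g : Matrix (Fin 2) (Fin 2) F)) *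
            ((g⁻¹ : SpecialLinearGroup (Fin 2) F) : Matrix (Fin 2) (Fin 2) F) := by
          rw [hg, mul_one]
      _ = ((((g⁻¹ : SpecialLinearGroup (Fin 2) F) : Matrix (Fin 2) (Fin 2) F).map σ)ᵀ *
            ((g : Matrix (Fin 2) (Fin 2) F).map σ)ᵀ) *
            ((g : Matrix (Fin 2) (Fin 2) F) *
              ((g⁻¹ : SpecialLinearGroup (Fin 2) F) : Matrix (Fin 2) (Fin 2) F)) := by
          noncomm_ring
      _ = 1 := by rw [h3, hBC, one_mul]

open Matrix in
/-- `SU₂(F,σ)` acts transitively on the vectors of any fixed nonzero hermitian norm, where the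
standard hermitian norm is `h(v) = v₁·σ(v₁) + v₂·σ(v₂)`. -/
theorem stmt_7 (q : ℕ) (hq : IsPrimePow q) (F : Type) [Field F] [Fintype F]
    (hF : Fintype.card F = q ^ 2) (σ : F →+* F) (hσ : ∀ x, σ x = x ^ q)
    (v w : Fin 2 → F)
    (hvw : v 0 * σ (v 0) + v 1 * σ (v 1) = w 0 * σ (w 0) + w 1 * σ (w 1))
    (hv : v 0 * σ (v 0) + v 1 * σ (v 1) ≠ 0) :
    ∃ g ∈ SU₂ σ, (g : Matrix (Fin 2) (Fin 2) F).mulVec v = w := by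

  have hpow : ∀ x : F, σ (σ x) = x := by
    intro x
    rw [hσ, hσ, ← pow_mul, ← sq, ← hF]
    exact FiniteField.pow_card x
  set a := v 0 with ha
  set b := v 1 with hb
  set x := w 0 with hx
  set y := w 1 with hy
  set c := a * σ a + b * σ b with hc
  have hdet : (!![(x * σ a + σ y * b)/c, (x * σ b - σ y * a)/c;
       (y * σ a - σ x * b)/c, (y * σ b + σ x * a)/c] :
       Matrix (Fin 2) (Fin 2) F).det = 1 := by
    rw [Matrix.det_fin_two_of]
    field_simp
    linear_combination (-(a * σ a + b * σ b)) * hvw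
  refine ⟨⟨_, hdet⟩, ?_, ?_⟩
  · show ((!![(x * σ a + σ y * b)/c, (x * σ b - σ y * a)/c;
       (y * σ a - σ x * b)/c, (y * σ b + σ x * a)/c] :
       Matrix (Fin 2) (Fin 2) F).map σ)ᵀ * _ = 1
    have hσc : σ c = c := by
      rw [hc, map_add, _root_.map_mul, _root_.map_mul, hpow, hpow]; ring
    ext i j
    fin_cases i <;> fin_cases j <;>
      simp [Matrix.mul_apply, Fin.sum_univ_succ, Matrix.map_apply, Matrix.transpose_apply,
        Matrix.one_apply, map_div₀, map_add, map_sub, _root_.map_mul, hpow, hσc] <;>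
      field_simp <;>
      ring_nf <;>
      linear_combination (-(a * σ a + b * σ b)) * hvw
  · funext i
    fin_cases i <;>
      simp [Matrix.mulVec, dotProduct, Fin.sum_univ_succ] <;>
      field_simp <;> ring
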